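/- Let S be a finite state space and A a finite action space, let T be the true transition kernel and T̂ a learned model, let r : S × A → ℝ be a reward function, γ ∈ (0,1), and π a policy. Suppose u : S × A → ℝ≥0 is an error oracle satisfying |Σ_{s'} (T̂(s'|s,a) − T(s'|s,a))·V^π_T(s')| ≤ u(s,a) for all (s,a), where V^π_T is the value function of π under the true dynamics T. Then the expected discounted return of π in the model MDP with dynamics T̂ and the uncertainty-penalized reward r̃(s,a) = r(s,a) − γ·u(s,a) lower-bounds the true return: J_{T̂, r̃}(π) ≤ J_{T, r}(π). (This is the conservative model-based guarantee underlying MOPO: optimizing the policy against a model with a penalized reward cannot overestimate real performance.) -/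

import Mathlib

open Finset

/-- Time-indexed state marginal `d_t^π(s) = P_{p_π}(s_t = s)` of the Markov chain
induced by policy `π` in a finite MDP with initial distribution `d0` and transition
kernel `T`. -/
noncomputable def stateDist {S A : Type} [Fintype S] [Fintype A]
    (d0 : S → ℝ) (T : S → A → S → ℝ) (π : S → A → ℝ) : ℕ → S → ℝ
  | 0, s => d0 s
  | t + 1, s' => ∑ s, ∑ a, stateDist d0 T π t s * π s a * T s a s'

/-- Normalized discounted state occupancy `d^π(s) = (1−γ) Σ_{t=0}^∞ γ^t P_{p_π}(s_t = s)`. -/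
noncomputable def occ {S A : Type} [Fintype S] [Fintype A]
    (d0 : S → ℝ) (T : S → A → S → ℝ) (π : S → A → ℝ) (γ : ℝ) (s : S) : ℝ :=
  (1 - γ) * ∑' t : ℕ, γ ^ t * stateDist d0 T π t s

/-- Infinite-horizon expected discounted return
`J_{T,r}(π) = E[Σ_{t=0}^∞ γ^t r(s_t, a_t)]` under dynamics `T` and reward `r`. -/
noncomputable def Jinf {S A : Type} [Fintype S] [Fintype A]
    (d0 : S → ℝ) (T : S → A → S → ℝ) (π : S → A → ℝ) (r : S → A → ℝ) (γ : ℝ) : ℝ :=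
  ∑' t : ℕ, γ ^ t * ∑ s, ∑ a, stateDist d0 T π t s * π s a * r s a

/-- Value function `V^π_T(s) = E[Σ_{t=0}^∞ γ^t r(s_t,a_t) | s₀ = s]` of `π` under
dynamics `T`, i.e. the return starting from the point mass at `s`. -/
noncomputable def Vpi {S A : Type} [Fintype S] [Fintype A] [DecidableEq S]
    (T : S → A → S → ℝ) (π : S → A → ℝ) (r : S → A → ℝ) (γ : ℝ) (s : S) : ℝ :=
  Jinf (fun s' => if s' = s then 1 else 0) T π r γ

section Aux
variable {S A : Type} [Fintype S] [Fintype A]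

/-- one-step pushforward of a state distribution -/
noncomputable def pushD (d : S → ℝ) (K : S → A → S → ℝ) (π : S → A → ℝ) (s' : S) : ℝ :=
  ∑ s, ∑ a, d s * π s a * K s a s'

lemma pushD_nonneg (d : S → ℝ) (K : S → A → S → ℝ) (π : S → A → ℝ)
    (hd : ∀ s, 0 ≤ d s) (hK : ∀ s a s', 0 ≤ K s a s') (hπ : ∀ s a, 0 ≤ π s a) (s' : S) :
    0 ≤ pushD d K π s' := by
  refine Finset.sum_nonneg fun s _ => Finset.sum_nonneg fun a _ => ?_
  exact mul_nonneg (mul_nonneg (hd s) (hπ s a)) (hK s a s')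

lemma pushD_sum_one (d : S → ℝ) (K : S → A → S → ℝ) (π : S → A → ℝ)
    (hd : ∑ s, d s = 1) (hK : ∀ s a, ∑ s', K s a s' = 1) (hπ : ∀ s, ∑ a, π s a = 1) :
    ∑ s', pushD d K π s' = 1 := by
  unfold pushD
  rw [Finset.sum_comm]
  calc ∑ s, ∑ s', ∑ a, d s * π s a * K s a s'
      = ∑ s, ∑ a, ∑ s', d s * π s a * K s a s' :=
        Finset.sum_congr rfl fun s _ => Finset.sum_comm
    _ = ∑ s, ∑ a, d s * π s a := by
        refine Finset.sum_congr rfl fun s _ => Finset.sum_congr rfl fun a _ => ?_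
        rw [← Finset.mul_sum, hK s a, mul_one]
    _ = ∑ s, d s := by
        refine Finset.sum_congr rfl fun s _ => ?_
        rw [← Finset.mul_sum, hπ s, mul_one]
    _ = 1 := hd

lemma stateDist_nonneg (d0 : S → ℝ) (K : S → A → S → ℝ) (π : S → A → ℝ)
    (hd0 : ∀ s, 0 ≤ d0 s) (hK : ∀ s a s', 0 ≤ K s a s') (hπ : ∀ s a, 0 ≤ π s a) :
    ∀ t s, 0 ≤ stateDist d0 K π t s := by
  intro t
  induction t with
  | zero => exact hd0
  | succ t ih => intro s'; exact pushD_nonneg _ K π ih hK hπ s'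

lemma stateDist_sum_one (d0 : S → ℝ) (K : S → A → S → ℝ) (π : S → A → ℝ)
    (hd0 : ∑ s, d0 s = 1) (hK : ∀ s a, ∑ s', K s a s' = 1) (hπ : ∀ s, ∑ a, π s a = 1) :
    ∀ t, ∑ s, stateDist d0 K π t s = 1 := by
  intro t
  induction t with
  | zero => exact hd0
  | succ t ih => exact pushD_sum_one _ K π ih hK hπ

/-- bound on an expectation under a probability distribution -/
lemma exp_abs_le (ρ : S → ℝ) (π : S → A → ℝ) (h : S → A → ℝ)
    (hρ0 : ∀ s, 0 ≤ ρ s) (hρ1 : ∑ s, ρ s = 1)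
    (hπ0 : ∀ s a, 0 ≤ π s a) (hπ1 : ∀ s, ∑ a, π s a = 1) :
    |∑ s, ∑ a, ρ s * π s a * h s a| ≤ ∑ s, ∑ a, |h s a| := by
  have hM : ∀ s a, |h s a| ≤ ∑ s, ∑ a, |h s a| := by
    intro s a
    have h1 : |h s a| ≤ ∑ a, |h s a| :=
      Finset.single_le_sum (f := fun a => |h s a|) (fun a _ => abs_nonneg _) (Finset.mem_univ a)
    exact h1.trans (Finset.single_le_sum (f := fun s => ∑ a, |h s a|)
      (fun s _ => Finset.sum_nonneg fun a _ => abs_nonneg _) (Finset.mem_univ s))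
  calc |∑ s, ∑ a, ρ s * π s a * h s a|
      ≤ ∑ s, ∑ a, |ρ s * π s a * h s a| :=
        (Finset.abs_sum_le_sum_abs _ _).trans
          (Finset.sum_le_sum fun s _ => Finset.abs_sum_le_sum_abs _ _)
    _ ≤ ∑ s, ∑ a, ρ s * π s a * (∑ s, ∑ a, |h s a|) := by
        refine Finset.sum_le_sum fun s _ => Finset.sum_le_sum fun a _ => ?_
        rw [abs_mul, abs_mul, abs_of_nonneg (hρ0 s), abs_of_nonneg (hπ0 s a)]
        exact mul_le_mul_of_nonneg_left (hM s a) (mul_nonneg (hρ0 s) (hπ0 s a))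
    _ = ∑ s, ∑ a, |h s a| := by
        have h1 : ∀ s, ∑ a, ρ s * π s a * (∑ s, ∑ a, |h s a|) = ρ s * (∑ s, ∑ a, |h s a|) := by
          intro s
          rw [← Finset.sum_mul, ← Finset.mul_sum, hπ1 s, mul_one]
        rw [Finset.sum_congr rfl fun s _ => h1 s, ← Finset.sum_mul, hρ1, one_mul]

lemma summable_geom_mul (γ : ℝ) (hγ0 : 0 ≤ γ) (hγ1 : γ < 1) (c : ℕ → ℝ) (M : ℝ)
    (hc : ∀ t, |c t| ≤ M) : Summable (fun t => γ ^ t * c t) := by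
  apply Summable.of_norm_bounded
    ((summable_geometric_of_lt_one hγ0 hγ1).mul_left M)
  intro t
  rw [Real.norm_eq_abs, abs_mul, abs_pow, abs_of_nonneg hγ0, mul_comm]
  exact mul_le_mul_of_nonneg_right (hc t) (pow_nonneg hγ0 t)

/-- shift at the start -/
lemma stateDist_shift (d0 : S → ℝ) (K : S → A → S → ℝ) (π : S → A → ℝ) :
    ∀ t s', stateDist d0 K π (t+1) s' = stateDist (pushD d0 K π) K π t s' := by
  intro t
  induction t with
  | zero => intro s'; rfl
  | succ t ih =>
      intro s'
      show ∑ s, ∑ a, stateDist d0 K π (t+1) s * π s a * K s a s'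
         = ∑ s, ∑ a, stateDist (pushD d0 K π) K π t s * π s a * K s a s'
      exact Finset.sum_congr rfl fun s _ => Finset.sum_congr rfl fun a _ => by rw [ih s]

/-- generic swap-and-factor identity -/
lemma lin_swap (d0 : S → ℝ) (σ : S → S → ℝ) (π : S → A → ℝ) (W : S → A → ℝ) :
    (∑ s, ∑ a, (∑ s0, d0 s0 * σ s0 s) * π s a * W s a)
      = ∑ s0, d0 s0 * ∑ s, ∑ a, σ s0 s * π s a * W s a := by
  calc (∑ s, ∑ a, (∑ s0, d0 s0 * σ s0 s) * π s a * W s a)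
      = ∑ s, ∑ a, ∑ s0, d0 s0 * (σ s0 s * π s a * W s a) := by
        refine Finset.sum_congr rfl fun s _ => Finset.sum_congr rfl fun a _ => ?_
        rw [Finset.sum_mul, Finset.sum_mul]
        exact Finset.sum_congr rfl fun s0 _ => by ring
    _ = ∑ s, ∑ s0, ∑ a, d0 s0 * (σ s0 s * π s a * W s a) :=
        Finset.sum_congr rfl fun s _ => Finset.sum_comm
    _ = ∑ s0, ∑ s, ∑ a, d0 s0 * (σ s0 s * π s a * W s a) := Finset.sum_comm
    _ = ∑ s0, d0 s0 * ∑ s, ∑ a, σ s0 s * π s a * W s a := by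
        refine Finset.sum_congr rfl fun s0 _ => ?_
        rw [Finset.mul_sum]
        exact Finset.sum_congr rfl fun s _ => (Finset.mul_sum _ _ _).symm

/-- linearity of stateDist in the initial distribution -/
lemma stateDist_linear [DecidableEq S] (d0 : S → ℝ) (K : S → A → S → ℝ) (π : S → A → ℝ) :
    ∀ t s, stateDist d0 K π t s
      = ∑ s0, d0 s0 * stateDist (fun s' => if s' = s0 then 1 else 0) K π t s := by
  intro t
  induction t with
  | zero =>
      intro s
      show d0 s = ∑ s0, d0 s0 * (if s = s0 then 1 else 0)
      simp [mul_ite]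
  | succ t ih =>
      intro s'
      show (∑ s, ∑ a, stateDist d0 K π t s * π s a * K s a s')
        = ∑ s0, d0 s0 * ∑ s, ∑ a, stateDist _ K π t s * π s a * K s a s'
      rw [Finset.sum_congr rfl fun s (_ : s ∈ univ) => Finset.sum_congr rfl
        fun a (_ : a ∈ univ) => by rw [ih s]]
      exact lin_swap d0 (fun s0 s => stateDist (fun s' => if s' = s0 then 1 else 0) K π t s)
        π (fun s a => K s a s')

/-- a moved-out expectation identity for the pushforward -/
lemma pushD_exp (ρ : S → ℝ) (K : S → A → S → ℝ) (π : S → A → ℝ) (f : S → ℝ) :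
    (∑ s', pushD ρ K π s' * f s')
      = ∑ s, ∑ a, ρ s * π s a * (∑ s', K s a s' * f s') := by
  calc ∑ s', pushD ρ K π s' * f s'
      = ∑ s', ∑ s, ∑ a, ρ s * π s a * (K s a s' * f s') := by
        refine Finset.sum_congr rfl fun s' _ => ?_
        rw [pushD, Finset.sum_mul]
        refine Finset.sum_congr rfl fun s _ => ?_
        rw [Finset.sum_mul]
        exact Finset.sum_congr rfl fun a _ => by ring
    _ = ∑ s, ∑ s', ∑ a, ρ s * π s a * (K s a s' * f s') := Finset.sum_comm
    _ = ∑ s, ∑ a, ∑ s', ρ s * π s a * (K s a s' * f s') :=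
        Finset.sum_congr rfl fun s _ => Finset.sum_comm
    _ = ∑ s, ∑ a, ρ s * π s a * (∑ s', K s a s' * f s') :=
        Finset.sum_congr rfl fun s _ => Finset.sum_congr rfl fun a _ =>
          (Finset.mul_sum _ _ _).symm

/-- Bellman-style recursion for `Jinf`. -/
lemma Jinf_bellman (d0 : S → ℝ) (K : S → A → S → ℝ) (π : S → A → ℝ) (r : S → A → ℝ) (γ : ℝ)
    (hγ0 : 0 ≤ γ) (hγ1 : γ < 1)
    (hd00 : ∀ s, 0 ≤ d0 s) (hd01 : ∑ s, d0 s = 1)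
    (hK0 : ∀ s a s', 0 ≤ K s a s') (hK1 : ∀ s a, ∑ s', K s a s' = 1)
    (hπ0 : ∀ s a, 0 ≤ π s a) (hπ1 : ∀ s, ∑ a, π s a = 1) :
    Jinf d0 K π r γ = (∑ s, ∑ a, d0 s * π s a * r s a)
      + γ * Jinf (pushD d0 K π) K π r γ := by
  have hsum : Summable (fun t => γ ^ t * ∑ s, ∑ a, stateDist d0 K π t s * π s a * r s a) :=
    summable_geom_mul γ hγ0 hγ1 _ (∑ s, ∑ a, |r s a|) (fun t =>
      exp_abs_le _ π r (stateDist_nonneg d0 K π hd00 hK0 hπ0 t)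
        (stateDist_sum_one d0 K π hd01 hK1 hπ1 t) hπ0 hπ1)
  rw [Jinf, Summable.tsum_eq_zero_add hsum]
  congr 1
  · simp [stateDist]
  · rw [Jinf, ← tsum_mul_left]
    refine tsum_congr fun n => ?_
    have h1 : (∑ s, ∑ a, stateDist d0 K π (n+1) s * π s a * r s a)
        = ∑ s, ∑ a, stateDist (pushD d0 K π) K π n s * π s a * r s a :=
      Finset.sum_congr rfl fun s _ => Finset.sum_congr rfl fun a _ => by
        rw [stateDist_shift]
    rw [h1, pow_succ]
    ring

/-- linearity of `Jinf` in the initial distribution -/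
lemma Jinf_linear [DecidableEq S] (d0 : S → ℝ) (K : S → A → S → ℝ) (π : S → A → ℝ)
    (r : S → A → ℝ) (γ : ℝ) (hγ0 : 0 ≤ γ) (hγ1 : γ < 1)
    (hK0 : ∀ s a s', 0 ≤ K s a s') (hK1 : ∀ s a, ∑ s', K s a s' = 1)
    (hπ0 : ∀ s a, 0 ≤ π s a) (hπ1 : ∀ s, ∑ a, π s a = 1) :
    Jinf d0 K π r γ
      = ∑ s0, d0 s0 * Jinf (fun s' => if s' = s0 then 1 else 0) K π r γ := by
  have hδ : ∀ s0 : S, Summable (fun t => γ ^ t * ∑ s, ∑ a,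
      stateDist (fun s' => if s' = s0 then 1 else 0) K π t s * π s a * r s a) := fun s0 =>
    summable_geom_mul γ hγ0 hγ1 _ (∑ s, ∑ a, |r s a|) (fun t =>
      exp_abs_le _ π r
        (stateDist_nonneg _ K π (fun s => by positivity) hK0 hπ0 t)
        (stateDist_sum_one _ K π (by simp) hK1 hπ1 t) hπ0 hπ1)
  calc Jinf d0 K π r γ
      = ∑' t, ∑ s0, d0 s0 * (γ ^ t * ∑ s, ∑ a,
          stateDist (fun s' => if s' = s0 then 1 else 0) K π t s * π s a * r s a) := by
        rw [Jinf]
        refine tsum_congr fun t => ?_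
        rw [Finset.sum_congr rfl fun s (_ : s ∈ univ) => Finset.sum_congr rfl
          fun a (_ : a ∈ univ) => by rw [stateDist_linear d0 K π t s]]
        rw [lin_swap d0 (fun s0 s => stateDist (fun s' => if s' = s0 then 1 else 0) K π t s)
          π r, Finset.mul_sum]
        exact Finset.sum_congr rfl fun s0 _ => by ring
    _ = ∑ s0, ∑' t, d0 s0 * (γ ^ t * ∑ s, ∑ a,
          stateDist (fun s' => if s' = s0 then 1 else 0) K π t s * π s a * r s a) :=
        Summable.tsum_finsetSum (fun s0 _ => (hδ s0).mul_left _)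
    _ = ∑ s0, d0 s0 * Jinf (fun s' => if s' = s0 then 1 else 0) K π r γ :=
        Finset.sum_congr rfl fun s0 _ => tsum_mul_left

end Aux

theorem mopo_conservative_bound
    {S A : Type} [Fintype S] [Fintype A] [DecidableEq S]
    (d0 : S → ℝ) (T That : S → A → S → ℝ) (π : S → A → ℝ)
    (r : S → A → ℝ) (γ : ℝ) (u : S → A → ℝ)
    (hγ0 : 0 < γ) (hγ1 : γ < 1)
    (hd00 : ∀ s, 0 ≤ d0 s) (hd01 : ∑ s, d0 s = 1)
    (hT0 : ∀ s a s', 0 ≤ T s a s') (hT1 : ∀ s a, ∑ s', T s a s' = 1)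
    (hThat0 : ∀ s a s', 0 ≤ That s a s') (hThat1 : ∀ s a, ∑ s', That s a s' = 1)
    (hπ0 : ∀ s a, 0 ≤ π s a) (hπ1 : ∀ s, ∑ a, π s a = 1)
    (hu0 : ∀ s a, 0 ≤ u s a)
    (hu : ∀ s a, |∑ s', (That s a s' - T s a s') * Vpi T π r γ s'| ≤ u s a) :
    Jinf d0 That π (fun s a => r s a - γ * u s a) γ ≤ Jinf d0 T π r γ := by
  have hγ0' : (0:ℝ) ≤ γ := le_of_lt hγ0
  set f : S → ℝ := Vpi T π r γ with hfdef
  set ρ : ℕ → S → ℝ := fun t => stateDist d0 That π t with hρdef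
  have hρ0 : ∀ t s, 0 ≤ ρ t s := stateDist_nonneg d0 That π hd00 hThat0 hπ0
  have hρ1 : ∀ t, ∑ s, ρ t s = 1 := stateDist_sum_one d0 That π hd01 hThat1 hπ1
  set F : (S → ℝ) → ℝ := fun d => ∑ s, d s * f s with hFdef
  set E : ℕ → ℝ := fun t => ∑ s, ∑ a, ρ t s * π s a * r s a with hEdef
  set U : ℕ → ℝ := fun t => ∑ s, ∑ a, ρ t s * π s a * u s a with hUdef
  set D : ℕ → ℝ := fun t =>
    ∑ s, ∑ a, ρ t s * π s a * (∑ s', (That s a s' - T s a s') * f s') with hDdef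
  -- linearity: Jinf d T = F d for any d
  have hlin : ∀ d : S → ℝ, Jinf d T π r γ = F d := by
    intro d
    rw [Jinf_linear d T π r γ hγ0' hγ1 hT0 hT1 hπ0 hπ1]
    rfl
  -- per-step identity
  have hE : ∀ t, E t = F (ρ t) - γ * F (ρ (t+1)) + γ * D t := by
    intro t
    have hb := Jinf_bellman (ρ t) T π r γ hγ0' hγ1 (hρ0 t) (hρ1 t) hT0 hT1 hπ0 hπ1
    have h1 : F (ρ t) = E t + γ * F (pushD (ρ t) T π) := by
      rw [← hlin (ρ t), hb, ← hlin (pushD (ρ t) T π)]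
    have h2 : F (ρ (t+1)) = F (pushD (ρ t) That π) := rfl
    have h3 : F (pushD (ρ t) That π) - F (pushD (ρ t) T π) = D t := by
      show (∑ s', pushD (ρ t) That π s' * f s') - (∑ s', pushD (ρ t) T π s' * f s') = D t
      rw [pushD_exp, pushD_exp, ← Finset.sum_sub_distrib]
      refine Finset.sum_congr rfl fun s _ => ?_
      rw [← Finset.sum_sub_distrib]
      refine Finset.sum_congr rfl fun a _ => ?_
      rw [← mul_sub]
      congr 1
      rw [← Finset.sum_sub_distrib]
      exact Finset.sum_congr rfl fun s' _ => by ring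
    have h4 : F (pushD (ρ t) T π) = F (ρ (t+1)) - D t := by rw [h2]; linarith [h3]
    rw [h1, h4]; ring
  -- summability
  have hsE : Summable (fun t => γ ^ t * E t) :=
    summable_geom_mul γ hγ0' hγ1 E (∑ s, ∑ a, |r s a|)
      (fun t => exp_abs_le (ρ t) π r (hρ0 t) (hρ1 t) hπ0 hπ1)
  have hsU : Summable (fun t => γ ^ t * U t) :=
    summable_geom_mul γ hγ0' hγ1 U (∑ s, ∑ a, |u s a|)
      (fun t => exp_abs_le (ρ t) π u (hρ0 t) (hρ1 t) hπ0 hπ1)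
  have hsD : Summable (fun t => γ ^ t * D t) :=
    summable_geom_mul γ hγ0' hγ1 D
      (∑ s, ∑ a, |∑ s', (That s a s' - T s a s') * f s'|)
      (fun t => exp_abs_le (ρ t) π _ (hρ0 t) (hρ1 t) hπ0 hπ1)
  -- telescoping partial sums
  have hpart : ∀ N, ∑ t ∈ Finset.range N, γ ^ t * E t
      = (F (ρ 0) - γ ^ N * F (ρ N)) + γ * ∑ t ∈ Finset.range N, γ ^ t * D t := by
    intro N
    calc ∑ t ∈ Finset.range N, γ ^ t * E t
        = ∑ t ∈ Finset.range N,
            ((γ ^ t * F (ρ t) - γ ^ (t+1) * F (ρ (t+1))) + γ * (γ ^ t * D t)) := by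
          refine Finset.sum_congr rfl fun t _ => ?_
          rw [hE t]; ring
      _ = _ := by
          rw [Finset.sum_add_distrib,
            Finset.sum_range_sub' (fun t => γ ^ t * F (ρ t)) N, ← Finset.mul_sum,
            pow_zero, one_mul]
  -- boundedness of F (ρ N)
  have hFbound : ∀ N, |F (ρ N)| ≤ ∑ s, |f s| := by
    intro N
    calc |F (ρ N)| ≤ ∑ s, |ρ N s * f s| := Finset.abs_sum_le_sum_abs _ _
      _ ≤ ∑ s, |f s| := by
          refine Finset.sum_le_sum fun s _ => ?_
          rw [abs_mul, abs_of_nonneg (hρ0 N s)]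
          have hle1 : ρ N s ≤ 1 := by
            rw [← hρ1 N]
            exact Finset.single_le_sum (f := fun s => ρ N s)
              (fun s _ => hρ0 N s) (Finset.mem_univ s)
          nlinarith [abs_nonneg (f s)]
  have htend0 : Filter.Tendsto (fun N => γ ^ N * F (ρ N)) Filter.atTop (nhds 0) := by
    refine squeeze_zero_norm (fun N => ?_)
      (by simpa using (tendsto_pow_atTop_nhds_zero_of_lt_one hγ0' hγ1).const_mul (∑ s, |f s|))
    rw [Real.norm_eq_abs, abs_mul, abs_pow, abs_of_nonneg hγ0', mul_comm]
    exact mul_le_mul_of_nonneg_right (hFbound N) (pow_nonneg hγ0' N)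
  have hlim1 : Filter.Tendsto (fun N => ∑ t ∈ Finset.range N, γ ^ t * E t)
      Filter.atTop (nhds (∑' t, γ ^ t * E t)) := hsE.hasSum.tendsto_sum_nat
  have hlim2 : Filter.Tendsto (fun N => ∑ t ∈ Finset.range N, γ ^ t * E t)
      Filter.atTop (nhds ((F (ρ 0) - 0) + γ * ∑' t, γ ^ t * D t)) := by
    have h : Filter.Tendsto
        (fun N => (F (ρ 0) - γ ^ N * F (ρ N)) + γ * ∑ t ∈ Finset.range N, γ ^ t * D t)
        Filter.atTop (nhds ((F (ρ 0) - 0) + γ * ∑' t, γ ^ t * D t)) :=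
      ((tendsto_const_nhds.sub htend0).add
        ((hsD.hasSum.tendsto_sum_nat).const_mul γ))
    exact h.congr (fun N => (hpart N).symm)
  have hkey : ∑' t, γ ^ t * E t = F (ρ 0) + γ * ∑' t, γ ^ t * D t := by
    have h := tendsto_nhds_unique hlim1 hlim2
    rw [h]; ring
  -- identify the Jinf values
  have hJhat : Jinf d0 That π (fun s a => r s a - γ * u s a) γ
      = ∑' t, γ ^ t * (E t - γ * U t) := by
    rw [Jinf]
    refine tsum_congr fun t => ?_
    congr 1
    calc ∑ s, ∑ a, stateDist d0 That π t s * π s a * (r s a - γ * u s a)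
        = ∑ s, ∑ a, (ρ t s * π s a * r s a - γ * (ρ t s * π s a * u s a)) :=
          Finset.sum_congr rfl fun s _ => Finset.sum_congr rfl fun a _ => by
            show ρ t s * π s a * (r s a - γ * u s a) = _
            ring
      _ = E t - γ * U t := by
          rw [hEdef, hUdef, Finset.mul_sum, ← Finset.sum_sub_distrib]
          refine Finset.sum_congr rfl fun s _ => ?_
          rw [Finset.mul_sum, ← Finset.sum_sub_distrib]
  have hsplit : ∑' t, γ ^ t * (E t - γ * U t)
      = (∑' t, γ ^ t * E t) - γ * ∑' t, γ ^ t * U t := by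
    have h1 : ∀ t, γ ^ t * (E t - γ * U t) = γ ^ t * E t - γ * (γ ^ t * U t) :=
      fun t => by ring
    rw [tsum_congr h1, Summable.tsum_sub hsE (hsU.mul_left γ), tsum_mul_left]
  -- termwise comparison
  have hDU : ∀ t, D t ≤ U t := by
    intro t
    refine Finset.sum_le_sum fun s _ => Finset.sum_le_sum fun a _ => ?_
    refine mul_le_mul_of_nonneg_left ?_ (mul_nonneg (hρ0 t s) (hπ0 s a))
    exact (le_abs_self _).trans (hu s a)
  have htD : ∑' t, γ ^ t * D t ≤ ∑' t, γ ^ t * U t :=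
    Summable.tsum_le_tsum (fun t => mul_le_mul_of_nonneg_left (hDU t) (pow_nonneg hγ0' t)) hsD hsU
  -- conclude
  have hJT : Jinf d0 T π r γ = F d0 := hlin d0
  have hρ00 : F (ρ 0) = F d0 := rfl
  rw [hJhat, hsplit, hkey, hJT, hρ00]
  have hmul : γ * ∑' t, γ ^ t * D t ≤ γ * ∑' t, γ ^ t * U t :=
    mul_le_mul_of_nonneg_left htD hγ0'
  linarith
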